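/- arXiv:math/9801067 — 2 statements merged into one kernel-verified Lean document; each statement's English description precedes it below -/
import Mathlib

section
/- In any domino tiling of the Aztec diamond of order n, the induced sequence of zigs and zags along the 2k spine squares (k = ⌈n/2⌉) contains exactly k zigs and exactly k zags. -/
/-- The Aztec diamond of order `n`: the set of unit squares, indexed by their
lower-left corners `(i, j) ∈ ℤ²` (so the square has center `(i+1/2, j+1/2)`),
satisfying `|i + 1/2| + |j + 1/2| ≤ n`. -/
def aztec (n : ℕ) : Set (ℤ × ℤ) :=
  {p | |2 * p.1 + 1| + |2 * p.2 + 1| ≤ 2 * n}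

/-- A domino tiling of the Aztec diamond of order `n`, encoded as the
involution sending each square to the other square of its domino. -/
structure Tiling (n : ℕ) where
  t : ℤ × ℤ → ℤ × ℤ
  mem_aztec : ∀ p ∈ aztec n, t p ∈ aztec n
  adj : ∀ p ∈ aztec n, |(t p).1 - p.1| + |(t p).2 - p.2| = 1
  invol : ∀ p ∈ aztec n, t (t p) = p
  eq_of_not_mem : ∀ p ∉ aztec n, t p = p

namespace AztecAux

lemma mem_aztec_iff {n : ℕ} {p : ℤ × ℤ} :
    p ∈ aztec n ↔ 2*p.1+1 + (2*p.2+1) ≤ 2*(n:ℤ) ∧ 2*p.1+1 - (2*p.2+1) ≤ 2*(n:ℤ) ∧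
      -(2*p.1+1) + (2*p.2+1) ≤ 2*(n:ℤ) ∧ -(2*p.1+1) - (2*p.2+1) ≤ 2*(n:ℤ) := by
  show |2*p.1+1| + |2*p.2+1| ≤ 2*(n:ℤ) ↔ _
  rcases abs_cases (2*p.1+1) with ⟨h1,h2⟩|⟨h1,h2⟩ <;>
    rcases abs_cases (2*p.2+1) with ⟨h3,h4⟩|⟨h3,h4⟩ <;> rw [h1,h3] <;> omega

/-- The Aztec diamond as a finset. -/
noncomputable def A (n : ℕ) : Finset (ℤ × ℤ) :=
  ((Finset.Icc (-(n:ℤ)) n) ×ˢ (Finset.Icc (-(n:ℤ)) n)).filter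
    (fun p => 2*p.1+1 + (2*p.2+1) ≤ 2*(n:ℤ) ∧ 2*p.1+1 - (2*p.2+1) ≤ 2*(n:ℤ) ∧
      -(2*p.1+1) + (2*p.2+1) ≤ 2*(n:ℤ) ∧ -(2*p.1+1) - (2*p.2+1) ≤ 2*(n:ℤ))

lemma mem_A {n : ℕ} {p : ℤ × ℤ} : p ∈ A n ↔ p ∈ aztec n := by
  rw [mem_aztec_iff]
  simp only [A, Finset.mem_filter, Finset.mem_product, Finset.mem_Icc]
  omega

lemma mem_A' {n : ℕ} {p : ℤ × ℤ} :
    p ∈ A n ↔ 2*p.1+1 + (2*p.2+1) ≤ 2*(n:ℤ) ∧ 2*p.1+1 - (2*p.2+1) ≤ 2*(n:ℤ) ∧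
      -(2*p.1+1) + (2*p.2+1) ≤ 2*(n:ℤ) ∧ -(2*p.1+1) - (2*p.2+1) ≤ 2*(n:ℤ) :=
  mem_A.trans mem_aztec_iff

lemma mem_A_mk {n : ℕ} {a b : ℤ} :
    ((a, b) : ℤ × ℤ) ∈ A n ↔ 2*a+1 + (2*b+1) ≤ 2*(n:ℤ) ∧ 2*a+1 - (2*b+1) ≤ 2*(n:ℤ) ∧
      -(2*a+1) + (2*b+1) ≤ 2*(n:ℤ) ∧ -(2*a+1) - (2*b+1) ≤ 2*(n:ℤ) := mem_A'

lemma neighbor {n : ℕ} (T : Tiling n) {p : ℤ × ℤ} (hp : p ∈ aztec n) :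
    T.t p = (p.1+1, p.2) ∨ T.t p = (p.1-1, p.2) ∨ T.t p = (p.1, p.2+1) ∨
      T.t p = (p.1, p.2-1) := by
  have h := T.adj p hp
  have h1 : ((T.t p).1 = p.1+1 ∧ (T.t p).2 = p.2) ∨ ((T.t p).1 = p.1-1 ∧ (T.t p).2 = p.2)
      ∨ ((T.t p).1 = p.1 ∧ (T.t p).2 = p.2+1) ∨ ((T.t p).1 = p.1 ∧ (T.t p).2 = p.2-1) := by
    rcases abs_cases ((T.t p).1 - p.1) with ⟨e1,_⟩|⟨e1,_⟩ <;>
      rcases abs_cases ((T.t p).2 - p.2) with ⟨e2,_⟩|⟨e2,_⟩ <;> rw [e1, e2] at h <;> omega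
  rcases h1 with ⟨a,b⟩|⟨a,b⟩|⟨a,b⟩|⟨a,b⟩
  · exact Or.inl (Prod.ext a b)
  · exact Or.inr (Or.inl (Prod.ext a b))
  · exact Or.inr (Or.inr (Or.inl (Prod.ext a b)))
  · exact Or.inr (Or.inr (Or.inr (Prod.ext a b)))

/-- Squares strictly below the diagonal. -/
noncomputable def Lset (n : ℕ) : Finset (ℤ × ℤ) := (A n).filter (fun p => p.2 < p.1)

section parity

variable (n : ℕ)

/-- The parity-flipping rotation shows #odd = #even in the Aztec diamond. -/
lemma card_parity :
    ((A n).filter (fun p => (p.1+p.2) % 2 = 1)).card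
      = ((A n).filter (fun p => (p.1+p.2) % 2 = 0)).card := by
  apply Finset.card_nbij' (fun p => (p.2, -1 - p.1)) (fun p => (-1 - p.2, p.1))
  · intro a ha; simp only [Finset.mem_coe, Finset.mem_filter, mem_A'] at ha ⊢; omega
  · intro a ha; simp only [Finset.mem_coe, Finset.mem_filter, mem_A'] at ha ⊢; omega
  · intro a _; simp [Prod.ext_iff] <;> omega
  · intro a _; simp [Prod.ext_iff] <;> omega

/-- Reflection swaps lower and upper regions preserving parity. -/
lemma card_swap (r : ℤ) :
    ((A n).filter (fun p => (p.1+p.2) % 2 = r ∧ p.2 < p.1)).card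
      = ((A n).filter (fun p => (p.1+p.2) % 2 = r ∧ p.1 < p.2)).card := by
  apply Finset.card_nbij' (fun p => (p.2, p.1)) (fun p => (p.2, p.1))
  · intro a ha; simp only [Finset.mem_coe, Finset.mem_filter, mem_A'] at ha ⊢; omega
  · intro a ha; simp only [Finset.mem_coe, Finset.mem_filter, mem_A'] at ha ⊢; omega
  · intro a _; simp
  · intro a _; simp

lemma tri (s : Finset (ℤ × ℤ)) (P : ℤ × ℤ → Prop) [DecidablePred P] :
    (s.filter P).card = (s.filter (fun p => P p ∧ p.2 < p.1)).card
      + (s.filter (fun p => P p ∧ p.1 < p.2)).card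
      + (s.filter (fun p => P p ∧ p.1 = p.2)).card := by
  rw [Finset.card_filter, Finset.card_filter, Finset.card_filter, Finset.card_filter,
    ← Finset.sum_add_distrib, ← Finset.sum_add_distrib]
  apply Finset.sum_congr rfl
  intro p _
  by_cases hP : P p <;> rcases lt_trichotomy p.1 p.2 with h|h|h <;>
    simp [hP, h, lt_asymm, lt_irrefl] <;> omega

lemma card_diag_odd :
    ((A n).filter (fun p => (p.1+p.2) % 2 = 1 ∧ p.1 = p.2)).card = 0 := by
  rw [Finset.card_eq_zero, Finset.filter_eq_empty_iff]
  intro p _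
  omega

lemma card_diag_even :
    ((A n).filter (fun p => (p.1+p.2) % 2 = 0 ∧ p.1 = p.2)).card = 2 * ((n+1)/2) := by
  have : ((A n).filter (fun p => (p.1+p.2) % 2 = 0 ∧ p.1 = p.2)).card
      = (Finset.Icc (-(((n+1)/2 : ℕ) : ℤ)) ((((n+1)/2 : ℕ) : ℤ) - 1)).card := by
    apply Finset.card_nbij' (fun p => p.1) (fun i => (i, i))
    · intro a ha
      simp only [Finset.mem_coe, Finset.mem_filter, mem_A'] at ha
      simp only [Finset.mem_coe, Finset.mem_Icc]
      omega
    · intro a ha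
      simp only [Finset.mem_coe, Finset.mem_Icc] at ha
      simp [Finset.mem_coe, Finset.mem_filter, mem_A_mk]
      omega
    · intro a ha
      simp only [Finset.mem_coe, Finset.mem_filter, mem_A'] at ha
      exact Prod.ext rfl ha.2.2
    · intro a _; rfl
  rw [this, Int.card_Icc]
  omega

/-- Key count: #odd(L) = #even(L) + k. -/
lemma key : ((A n).filter (fun p => (p.1+p.2) % 2 = 1 ∧ p.2 < p.1)).card
    = ((A n).filter (fun p => (p.1+p.2) % 2 = 0 ∧ p.2 < p.1)).card + (n+1)/2 := by
  have h1 := card_parity n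
  rw [tri (A n) (fun p => (p.1+p.2) % 2 = 1), tri (A n) (fun p => (p.1+p.2) % 2 = 0),
    card_diag_odd, card_diag_even, ← card_swap n 1, ← card_swap n 0] at h1
  omega

end parity

section tiling

variable {n : ℕ} (T : Tiling n)

/-- Lower squares whose partner is a (diagonal) spine square. -/
noncomputable def LZ : Finset (ℤ × ℤ) := (A n).filter (fun p => p.2 < p.1 ∧ T.t p ∉ Lset n)

/-- Lower squares whose partner is also a lower square. -/
noncomputable def LL : Finset (ℤ × ℤ) := (A n).filter (fun p => p.2 < p.1 ∧ T.t p ∈ Lset n)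

lemma LZ_struct : ∀ p ∈ LZ T, p.1 = p.2 + 1 ∧
    (T.t p = (p.2, p.2) ∨ T.t p = (p.1, p.1)) := by
  intro p hp
  simp only [LZ, Finset.mem_filter] at hp
  obtain ⟨hpA, hlt, hq⟩ := hp
  have hpaz : p ∈ aztec n := mem_A.1 hpA
  have hqA : T.t p ∈ A n := mem_A.2 (T.mem_aztec p hpaz)
  have hqlt : ¬ (T.t p).2 < (T.t p).1 := by
    intro h
    exact hq (by simp only [Lset, Finset.mem_filter]; exact ⟨hqA, h⟩)
  rcases neighbor T hpaz with h|h|h|h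
  · exfalso; rw [h] at hqlt; simp at hqlt; omega
  · have h2 : p.2 = p.1 - 1 := by rw [h] at hqlt; simp at hqlt; omega
    refine ⟨by omega, Or.inl ?_⟩
    rw [h, h2]
  · have h2 : p.1 = p.2 + 1 := by rw [h] at hqlt; simp at hqlt; omega
    refine ⟨h2, Or.inr ?_⟩
    rw [h, h2]
  · exfalso; rw [h] at hqlt; simp at hqlt; omega

lemma LZ_odd : ∀ p ∈ LZ T, (p.1 + p.2) % 2 = 1 := by
  intro p hp
  have := (LZ_struct T p hp).1
  omega

lemma diag_mem_aztec (i : ℤ) (h1 : -(((n+1)/2 : ℕ) : ℤ) ≤ i)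
    (h2 : i ≤ (((n+1)/2 : ℕ) : ℤ) - 1) : ((i, i) : ℤ × ℤ) ∈ aztec n := by
  rw [show ((i, i) : ℤ × ℤ) ∈ aztec n ↔ _ from mem_aztec_iff]
  simp only
  omega

/-- Number of zig spine squares equals the number of LZ squares. -/
lemma card_Z_eq_LZ :
    ((Finset.Icc (-(((n+1)/2 : ℕ) : ℤ)) ((((n+1)/2 : ℕ) : ℤ) - 1)).filter
      (fun i => T.t (i, i) = (i + 1, i) ∨ T.t (i, i) = (i, i - 1))).card = (LZ T).card := by
  apply Finset.card_nbij' (fun i => T.t (i, i)) (fun p => (T.t p).1)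
  · intro i hi
    simp only [Finset.mem_coe, Finset.mem_filter, Finset.mem_Icc] at hi
    obtain ⟨⟨hi1, hi2⟩, hz⟩ := hi
    have haz : ((i, i) : ℤ × ℤ) ∈ aztec n := diag_mem_aztec i hi1 hi2
    have hqA : T.t (i, i) ∈ A n := mem_A.2 (T.mem_aztec _ haz)
    have hinv : T.t (T.t (i, i)) = (i, i) := T.invol _ haz
    simp only [Finset.mem_coe, LZ, Finset.mem_filter]
    refine ⟨hqA, ?_, ?_⟩
    · rcases hz with h|h <;> rw [h] <;> simp <;> omega
    · rw [hinv]
      simp only [Lset, Finset.mem_filter]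
      intro hmem
      exact absurd hmem.2 (by simp)
  · intro p hp
    have hst := LZ_struct T p hp
    simp only [Finset.mem_coe, LZ, Finset.mem_filter] at hp
    obtain ⟨hpA, hlt, _⟩ := hp
    have hpaz : p ∈ aztec n := mem_A.1 hpA
    have hqA : T.t p ∈ A n := mem_A.2 (T.mem_aztec p hpaz)
    have hinv : T.t (T.t p) = p := T.invol _ hpaz
    simp only [Finset.mem_coe, Finset.mem_filter, Finset.mem_Icc]
    rcases hst.2 with h|h
    · rw [h]
      have hb : ((p.2 : ℤ), (p.2 : ℤ)) ∈ A n := by rw [← h]; exact hqA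
      rw [mem_A_mk] at hb
      simp only
      refine ⟨by omega, ?_⟩
      left
      rw [← h, hinv]
      have hp1 : p.1 = p.2 + 1 := hst.1
      exact Prod.ext hp1 rfl
    · rw [h]
      have hb : ((p.1 : ℤ), (p.1 : ℤ)) ∈ A n := by rw [← h]; exact hqA
      rw [mem_A_mk] at hb
      simp only
      refine ⟨by omega, ?_⟩
      right
      rw [← h, hinv]
      have hp2 : p.2 = p.1 - 1 := by have := hst.1; omega
      exact Prod.ext rfl hp2
  · intro i hi
    simp only [Finset.mem_coe, Finset.mem_filter, Finset.mem_Icc] at hi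
    have haz : ((i, i) : ℤ × ℤ) ∈ aztec n := diag_mem_aztec i hi.1.1 hi.1.2
    simp only; rw [T.invol _ haz]
  · intro p hp
    have hst := LZ_struct T p hp
    simp only [Finset.mem_coe, LZ, Finset.mem_filter] at hp
    have hpaz : p ∈ aztec n := mem_A.1 hp.1
    have hinv : T.t (T.t p) = p := T.invol _ hpaz
    have e : ((T.t p).1, (T.t p).1) = T.t p := by
      rcases hst.2 with h|h <;> rw [h]
    show T.t ((T.t p).1, (T.t p).1) = p
    rw [e, hinv]

lemma card_LL_parity :
    ((LL T).filter (fun p => (p.1+p.2) % 2 = 1)).card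
      = ((LL T).filter (fun p => (p.1+p.2) % 2 = 0)).card := by
  apply Finset.card_nbij' (fun p => T.t p) (fun p => T.t p) <;> intro p hp <;>
    simp only [Finset.mem_coe, LL, Lset, Finset.mem_filter] at hp ⊢
  · obtain ⟨⟨hpA, hlt, hqA, hqlt⟩, hpar⟩ := hp
    have hpaz : p ∈ aztec n := mem_A.1 hpA
    have hinv : T.t (T.t p) = p := T.invol _ hpaz
    refine ⟨⟨hqA, hqlt, by rw [hinv]; exact ⟨hpA, hlt⟩⟩, ?_⟩
    rcases neighbor T hpaz with h|h|h|h <;> rw [h] <;> simp only <;> omega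
  · obtain ⟨⟨hpA, hlt, hqA, hqlt⟩, hpar⟩ := hp
    have hpaz : p ∈ aztec n := mem_A.1 hpA
    have hinv : T.t (T.t p) = p := T.invol _ hpaz
    refine ⟨⟨hqA, hqlt, by rw [hinv]; exact ⟨hpA, hlt⟩⟩, ?_⟩
    rcases neighbor T hpaz with h|h|h|h <;> rw [h] <;> simp only <;> omega
  · exact T.invol _ (mem_A.1 hp.1.1)
  · exact T.invol _ (mem_A.1 hp.1.1)

lemma card_LZ : (LZ T).card = (n+1)/2 := by
  classical
  have hsplit1 : (((A n).filter (fun p => (p.1+p.2) % 2 = 1 ∧ p.2 < p.1)).filter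
        (fun p => T.t p ∈ Lset n)).card
      + (((A n).filter (fun p => (p.1+p.2) % 2 = 1 ∧ p.2 < p.1)).filter
        (fun p => ¬ T.t p ∈ Lset n)).card
      = ((A n).filter (fun p => (p.1+p.2) % 2 = 1 ∧ p.2 < p.1)).card :=
    Finset.card_filter_add_card_filter_not _
  have hsplit0 : (((A n).filter (fun p => (p.1+p.2) % 2 = 0 ∧ p.2 < p.1)).filter
        (fun p => T.t p ∈ Lset n)).card
      + (((A n).filter (fun p => (p.1+p.2) % 2 = 0 ∧ p.2 < p.1)).filter
        (fun p => ¬ T.t p ∈ Lset n)).card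
      = ((A n).filter (fun p => (p.1+p.2) % 2 = 0 ∧ p.2 < p.1)).card :=
    Finset.card_filter_add_card_filter_not _
  have e1 : ((A n).filter (fun p => (p.1+p.2) % 2 = 1 ∧ p.2 < p.1)).filter
        (fun p => T.t p ∈ Lset n) = (LL T).filter (fun p => (p.1+p.2) % 2 = 1) := by
    ext p
    simp only [LL, Finset.mem_filter, Finset.filter_filter]
    tauto
  have e0 : ((A n).filter (fun p => (p.1+p.2) % 2 = 0 ∧ p.2 < p.1)).filter
        (fun p => T.t p ∈ Lset n) = (LL T).filter (fun p => (p.1+p.2) % 2 = 0) := by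
    ext p
    simp only [LL, Finset.mem_filter, Finset.filter_filter]
    tauto
  have e2 : ((A n).filter (fun p => (p.1+p.2) % 2 = 1 ∧ p.2 < p.1)).filter
        (fun p => ¬ T.t p ∈ Lset n) = LZ T := by
    ext p
    simp only [LZ, Finset.mem_filter, Finset.filter_filter]
    constructor
    · rintro ⟨hA, ⟨_, h2⟩, h3⟩; exact ⟨hA, h2, h3⟩
    · rintro ⟨hA, h2, h3⟩
      have : (p.1 + p.2) % 2 = 1 :=
        LZ_odd T p (by simp only [LZ, Finset.mem_filter]; exact ⟨hA, h2, h3⟩)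
      exact ⟨hA, ⟨this, h2⟩, h3⟩
  have e3 : ((A n).filter (fun p => (p.1+p.2) % 2 = 0 ∧ p.2 < p.1)).filter
        (fun p => ¬ T.t p ∈ Lset n) = ∅ := by
    rw [Finset.filter_eq_empty_iff]
    rintro p hp hnot
    simp only [Finset.mem_filter] at hp
    have : (p.1 + p.2) % 2 = 1 := LZ_odd T p (by
      simp only [LZ, Finset.mem_filter]; exact ⟨hp.1, hp.2.2, hnot⟩)
    omega
  rw [e1, e2] at hsplit1
  rw [e0, e3] at hsplit0
  have hkey := key n
  have hpar := card_LL_parity T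
  simp only [Finset.card_empty] at hsplit0
  omega

end tiling

end AztecAux

open AztecAux

/-- Let `k = ⌈n/2⌉`; the spine consists of the `2k` squares `(i, i)` with
`i = m - k` for `m = 0, ..., 2k - 1`.  In any domino tiling, the induced
sequence of zigs and zags along the spine (a zig at a spine square when its
domino extends to the right or down, a zag when it extends to the left or up)
contains exactly `k` zigs and exactly `k` zags. -/
theorem spine_zigs_eq_zags (n : ℕ) (hn : 0 < n) (T : Tiling n) :
    (Finset.univ.filter (fun m : Fin (2 * ((n + 1) / 2)) =>
      (fun i : ℤ => T.t (i, i) = (i + 1, i) ∨ T.t (i, i) = (i, i - 1))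
        ((m : ℤ) - ((n + 1) / 2 : ℕ)))).card = (n + 1) / 2
    ∧ (Finset.univ.filter (fun m : Fin (2 * ((n + 1) / 2)) =>
      (fun i : ℤ => T.t (i, i) = (i - 1, i) ∨ T.t (i, i) = (i, i + 1))
        ((m : ℤ) - ((n + 1) / 2 : ℕ)))).card = (n + 1) / 2 := by
  classical
  have hzigcard : (Finset.univ.filter (fun m : Fin (2 * ((n + 1) / 2)) =>
      (fun i : ℤ => T.t (i, i) = (i + 1, i) ∨ T.t (i, i) = (i, i - 1))
        ((m : ℤ) - ((n + 1) / 2 : ℕ)))).card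
      = ((Finset.Icc (-(((n+1)/2 : ℕ) : ℤ)) ((((n+1)/2 : ℕ) : ℤ) - 1)).filter
        (fun i => T.t (i, i) = (i + 1, i) ∨ T.t (i, i) = (i, i - 1))).card := by
    refine Finset.card_bij' (fun m _ => (m : ℤ) - (((n+1)/2 : ℕ) : ℤ))
      (fun i hi => (⟨(i + (((n+1)/2 : ℕ) : ℤ)).toNat, by
        simp only [Finset.mem_filter, Finset.mem_Icc] at hi; omega⟩ : Fin (2 * ((n+1)/2))))
      ?_ ?_ ?_ ?_
    · intro m hm
      simp only [Finset.mem_filter, Finset.mem_univ, true_and] at hm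
      simp only [Finset.mem_filter, Finset.mem_Icc]
      have := m.isLt
      exact ⟨⟨by omega, by omega⟩, hm⟩
    · intro i hi
      simp only [Finset.mem_filter, Finset.mem_univ, true_and]
      simp only [Finset.mem_filter, Finset.mem_Icc] at hi
      have h2 : ((((i + (((n+1)/2 : ℕ) : ℤ)).toNat : ℕ)) : ℤ)
          = i + (((n+1)/2 : ℕ) : ℤ) := by omega
      show (fun j : ℤ => T.t (j, j) = (j + 1, j) ∨ T.t (j, j) = (j, j - 1))
        (((i + (((n+1)/2 : ℕ) : ℤ)).toNat : ℤ) - (((n+1)/2 : ℕ) : ℤ))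
      rw [h2]
      simpa using hi.2
    · intro m hm
      apply Fin.ext
      simp only
      omega
    · intro i hi
      simp only [Finset.mem_filter, Finset.mem_Icc] at hi
      simp only
      omega
  have h1 : (Finset.univ.filter (fun m : Fin (2 * ((n + 1) / 2)) =>
      (fun i : ℤ => T.t (i, i) = (i + 1, i) ∨ T.t (i, i) = (i, i - 1))
        ((m : ℤ) - ((n + 1) / 2 : ℕ)))).card = (n + 1) / 2 := by
    rw [hzigcard, card_Z_eq_LZ, card_LZ]
  refine ⟨h1, ?_⟩
  have hdisj' : ∀ i : ℤ, ((i, i) : ℤ × ℤ) ∈ aztec n →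
      ((T.t (i, i) = (i - 1, i) ∨ T.t (i, i) = (i, i + 1))
        ↔ ¬ (T.t (i, i) = (i + 1, i) ∨ T.t (i, i) = (i, i - 1))) := by
    intro i haz
    have h4 : T.t (i, i) = (i + 1, i) ∨ T.t (i, i) = (i - 1, i) ∨
        T.t (i, i) = (i, i + 1) ∨ T.t (i, i) = (i, i - 1) := by
      simpa using neighbor T haz
    rcases h4 with h|h|h|h <;> rw [h] <;> simp [Prod.mk.injEq] <;> omega
  have hdisj : ∀ m : Fin (2 * ((n + 1) / 2)),
      ((fun i : ℤ => T.t (i, i) = (i - 1, i) ∨ T.t (i, i) = (i, i + 1))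
        ((m : ℤ) - ((n + 1) / 2 : ℕ)))
      ↔ ¬ ((fun i : ℤ => T.t (i, i) = (i + 1, i) ∨ T.t (i, i) = (i, i - 1))
        ((m : ℤ) - ((n + 1) / 2 : ℕ))) := by
    intro m
    have hm := m.isLt
    refine hdisj' _ (diag_mem_aztec _ ?_ ?_) <;> omega
  have heq : (Finset.univ.filter (fun m : Fin (2 * ((n + 1) / 2)) =>
      (fun i : ℤ => T.t (i, i) = (i - 1, i) ∨ T.t (i, i) = (i, i + 1))
        ((m : ℤ) - ((n + 1) / 2 : ℕ))))
      = (Finset.univ.filter (fun m : Fin (2 * ((n + 1) / 2)) =>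
        ¬ ((fun i : ℤ => T.t (i, i) = (i + 1, i) ∨ T.t (i, i) = (i, i - 1))
        ((m : ℤ) - ((n + 1) / 2 : ℕ))))) :=
    Finset.filter_congr (fun m _ => hdisj m)
  have hcards := Finset.card_filter_add_card_filter_not
    (s := (Finset.univ : Finset (Fin (2 * ((n + 1) / 2)))))
    (fun m : Fin (2 * ((n + 1) / 2)) =>
      (fun i : ℤ => T.t (i, i) = (i + 1, i) ∨ T.t (i, i) = (i, i - 1))
        ((m : ℤ) - ((n + 1) / 2 : ℕ)))
  rw [heq]
  rw [Finset.card_univ, Fintype.card_fin] at hcards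
  omega
end

section
/- Let λ = (a_k - k, ..., a_1 - 1) for a_1 < ... < a_k. The Schur polynomial s_λ(x_1,...,x_k) equals the k×k determinant whose (i,j) entry is h_{a_{k+1-i} - k + j - 1}(x_1,...,x_k), where h_m denotes the complete homogeneous symmetric polynomial of degree m (with h_m = 0 for m < 0); equivalently, the Jacobi–Trudi identity holds for this shape. -/
open Finset MvPolynomial

/-- `h_m` for `m : ℤ`: the complete homogeneous symmetric polynomial of degree
`m` in the variables `x₁, ..., x_k`, with `h_m = 0` for `m < 0`. -/
noncomputable def hZ (k : ℕ) (m : ℤ) : MvPolynomial (Fin k) ℚ :=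
  if 0 ≤ m then MvPolynomial.hsymm (Fin k) ℚ m.toNat else 0

noncomputable def Pser (k : ℕ) (s : Finset (Fin k)) : PowerSeries (MvPolynomial (Fin k) ℚ) :=
  ∏ j ∈ s, (1 - PowerSeries.C (X j) * PowerSeries.X)

noncomputable def Hser (k : ℕ) : PowerSeries (MvPolynomial (Fin k) ℚ) :=
  PowerSeries.mk fun n => hsymm (Fin k) ℚ n

noncomputable def geomSer {k : ℕ} (q : Fin k) : PowerSeries (MvPolynomial (Fin k) ℚ) :=
  PowerSeries.mk fun n => (X q : MvPolynomial (Fin k) ℚ) ^ n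

lemma geom_mul {k : ℕ} (q : Fin k) :
    (1 - PowerSeries.C (X q) * PowerSeries.X) * geomSer q = 1 := by
  ext n
  cases n with
  | zero => simp [geomSer, PowerSeries.coeff_mul]
  | succ n =>
    rw [sub_mul, one_mul, mul_assoc, map_sub, PowerSeries.coeff_C_mul,
      PowerSeries.coeff_succ_X_mul]
    simp [geomSer, pow_succ, mul_comm]

lemma hsymm_eq (k n : ℕ) :
    hsymm (Fin k) ℚ n =
      ∑ l ∈ Finset.finsuppAntidiag (univ : Finset (Fin k)) n,
        ∏ i, (X i : MvPolynomial (Fin k) ℚ) ^ l i := by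
  rw [hsymm]
  refine Finset.sum_bij (fun s _ => Multiset.toFinsupp s.1) ?_ ?_ ?_ ?_
  · intro a _
    simp only [Finset.mem_finsuppAntidiag]
    constructor
    · have h1 : ∀ i ∈ (univ : Finset (Fin k)), Multiset.toFinsupp a.1 i = a.1.count i :=
        fun i _ => rfl
      rw [Finset.sum_congr rfl h1, Multiset.sum_count_eq_card (fun x _ => Finset.mem_univ x)]
      exact a.2
    · exact Finset.subset_univ _
  · intro a _ b _ hab
    exact Subtype.ext (Multiset.toFinsupp.injective hab)
  · intro l hl
    rw [Finset.mem_finsuppAntidiag'] at hl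
    refine ⟨⟨Finsupp.toMultiset l, by rw [Finsupp.card_toMultiset]; exact hl.1⟩,
      Finset.mem_univ _, ?_⟩
    simp
  · intro a _
    rw [Finset.prod_multiset_map_count]
    refine Finset.prod_subset (Finset.subset_univ _) ?_
    intro x _ hx
    have : a.1.count x = 0 := by
      simpa [Multiset.count_eq_zero] using fun h => hx (Multiset.mem_toFinset.2 h)
    show (X x : MvPolynomial (Fin k) ℚ) ^ a.1.count x = 1
    rw [this, pow_zero]

lemma prod_geom (k : ℕ) : ∏ q : Fin k, geomSer q = Hser k := by
  refine PowerSeries.ext fun n => ?_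
  rw [PowerSeries.coeff_prod]
  simp only [geomSer, PowerSeries.coeff_mk, Hser]
  exact (hsymm_eq k n).symm

lemma Pser_univ_mul (k : ℕ) : Pser k univ * Hser k = 1 := by
  rw [← prod_geom, Pser, ← Finset.prod_mul_distrib]
  exact Finset.prod_eq_one fun q _ => geom_mul q

lemma Pser_erase_mul {k : ℕ} (q : Fin k) :
    Pser k (univ.erase q) * Hser k = geomSer q := by
  have h1 : (1 - PowerSeries.C (X q) * PowerSeries.X) * Pser k (univ.erase q) = Pser k univ := by
    rw [Pser, Pser]; exact Finset.mul_prod_erase univ (fun j => 1 - PowerSeries.C (X j) * PowerSeries.X) (Finset.mem_univ q)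
  calc Pser k (univ.erase q) * Hser k
      = ((1 - PowerSeries.C (X q) * PowerSeries.X) * geomSer q) *
          (Pser k (univ.erase q) * Hser k) := by rw [geom_mul, one_mul]
    _ = geomSer q * (Pser k univ * Hser k) := by rw [← h1]; ring
    _ = geomSer q := by rw [Pser_univ_mul, mul_one]

lemma coeff_Pser_zero {k : ℕ} (s : Finset (Fin k)) :
    ∀ r, s.card < r → PowerSeries.coeff r (Pser k s) = 0 := by
  induction s using Finset.induction_on with
  | empty =>
    intro r hr
    rw [Pser, Finset.prod_empty, PowerSeries.coeff_one, if_neg (by omega)]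
  | insert a s ha ih =>
    intro r hr
    rw [Finset.card_insert_of_notMem ha] at hr
    obtain ⟨r', rfl⟩ : ∃ r', r = r' + 1 := ⟨r - 1, by omega⟩
    rw [Pser, Finset.prod_insert ha, sub_mul, one_mul, map_sub, mul_assoc,
      PowerSeries.coeff_C_mul, PowerSeries.coeff_succ_X_mul, ← Pser,
      ih _ (by omega), ih _ (by omega), mul_zero, sub_zero]

lemma hZ_of_le {k n r : ℕ} (h : r ≤ n) : hZ k ((n : ℤ) - r) = hsymm (Fin k) ℚ (n - r) := by
  rw [hZ, if_pos (by omega)]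
  congr 1
  omega

lemma hZ_of_neg {k : ℕ} {m : ℤ} (h : m < 0) : hZ k m = 0 := by
  rw [hZ, if_neg (by omega)]

lemma entry {k : ℕ} (q : Fin k) (n : ℕ) :
    (X q : MvPolynomial (Fin k) ℚ) ^ n =
      ∑ r ∈ Finset.range k,
        PowerSeries.coeff r (Pser k (univ.erase q)) * hZ k ((n : ℤ) - r) := by
  have h0 := congrArg (PowerSeries.coeff n) (Pser_erase_mul q)
  rw [PowerSeries.coeff_mul, Finset.Nat.sum_antidiagonal_eq_sum_range_succ_mk] at h0
  simp only [geomSer, Hser, PowerSeries.coeff_mk] at h0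
  have h1 : ∑ r ∈ Finset.range (n + 1),
      PowerSeries.coeff r (Pser k (univ.erase q)) * hsymm (Fin k) ℚ (n - r) =
      ∑ r ∈ Finset.range (n + 1),
      PowerSeries.coeff r (Pser k (univ.erase q)) * hZ k ((n : ℤ) - r) :=
    Finset.sum_congr rfl fun r hr => by
      rw [hZ_of_le (by simpa using Nat.lt_succ_iff.mp (Finset.mem_range.mp hr))]
  set f : ℕ → MvPolynomial (Fin k) ℚ :=
    fun r => PowerSeries.coeff r (Pser k (univ.erase q)) * hZ k ((n : ℤ) - r) with hf
  have hcard : (univ.erase q).card = k - 1 := by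
    rw [Finset.card_erase_of_mem (Finset.mem_univ q), Finset.card_univ, Fintype.card_fin]
  have h2 : ∑ r ∈ Finset.range (n + 1), f r = ∑ r ∈ Finset.range (n + 1 + k), f r := by
    refine Finset.sum_subset (Finset.range_subset_range.2 (by omega)) fun x _ hx => ?_
    simp only [hf]
    have : (n : ℤ) - x < 0 := by
      have := Finset.mem_range.not.mp hx
      omega
    rw [hZ_of_neg this, mul_zero]
  have h3 : ∑ r ∈ Finset.range k, f r = ∑ r ∈ Finset.range (n + 1 + k), f r := by
    refine Finset.sum_subset (Finset.range_subset_range.2 (by omega)) fun x _ hx => ?_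
    simp only [hf]
    rw [coeff_Pser_zero _ _ (show (univ.erase q).card < x by
      rw [hcard]; have := Finset.mem_range.not.mp hx; have := q.pos; omega), zero_mul]
  rw [h3, ← h2, ← h1, ← h0]

lemma key {k : ℕ} (hk : 0 < k) (b : Fin k → ℕ) :
    Matrix.det (Matrix.of fun i j : Fin k => hZ k ((b i : ℤ) + 1 - k + j)) *
      Matrix.det (Matrix.of fun j q : Fin k =>
        PowerSeries.coeff (k - 1 - j) (Pser k (univ.erase q))) =
    Matrix.det (Matrix.of fun i q : Fin k => (X q : MvPolynomial (Fin k) ℚ) ^ b i) := by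
  rw [← Matrix.det_mul]
  congr 1
  refine Matrix.ext fun i q => ?_
  rw [Matrix.mul_apply]
  show (∑ j : Fin k, hZ k ((b i : ℤ) + 1 - k + j) *
    PowerSeries.coeff (k - 1 - (j : ℕ)) (Pser k (univ.erase q))) = X q ^ b i
  rw [entry q (b i), Fin.sum_univ_eq_sum_range (fun j => hZ k ((b i : ℤ) + 1 - k + j) *
    PowerSeries.coeff (k - 1 - j) (Pser k (univ.erase q))), ← Finset.sum_range_reflect]
  refine Finset.sum_congr rfl fun j hj => ?_
  have hjk := Finset.mem_range.mp hj
  have h1 : k - 1 - (k - 1 - j) = j := by omega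
  have h2 : (b i : ℤ) + 1 - k + ((k - 1 - j : ℕ) : ℤ) = (b i : ℤ) - j := by omega
  rw [h1, h2, mul_comm]

lemma baseH {k : ℕ} :
    Matrix.det (Matrix.of fun i j : Fin k =>
      hZ k (((k - 1 - (i : ℕ) : ℕ) : ℤ) + 1 - k + j)) = 1 := by
  have ht : Matrix.BlockTriangular (Matrix.of fun i j : Fin k =>
      hZ k (((k - 1 - (i : ℕ) : ℕ) : ℤ) + 1 - k + j)) id := by
    intro i j hij
    have hi := i.is_lt
    exact hZ_of_neg (by simp only [id] at hij; omega)
  rw [Matrix.det_of_upperTriangular ht]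
  refine Finset.prod_eq_one fun i _ => ?_
  show hZ k _ = 1
  have hi := i.is_lt
  have : ((k - 1 - (i : ℕ) : ℕ) : ℤ) + 1 - k + i = 0 := by omega
  rw [this, hZ, if_pos le_rfl, Int.toNat_zero, hsymm_zero]

lemma prodIoi {M : Type*} [CommMonoid M] {k : ℕ} (g : Fin k → Fin k → M) :
    ∏ i, ∏ j ∈ Finset.Ioi i, g i j =
      ∏ p ∈ Finset.univ.filter (fun p : Fin k × Fin k => p.1 < p.2), g p.1 p.2 := by
  rw [Finset.prod_sigma' univ (fun i => Finset.Ioi i) (fun i j => g i j)]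
  refine Finset.prod_nbij' (fun x => (x.1, x.2)) (fun p => ⟨p.1, p.2⟩) ?_ ?_ ?_ ?_ ?_ <;>
    simp [Finset.mem_sigma, Finset.mem_Ioi]

lemma baseX {k : ℕ} :
    Matrix.det (Matrix.of fun i q : Fin k =>
        (X q : MvPolynomial (Fin k) ℚ) ^ (k - 1 - (i : ℕ))) =
      ∏ p ∈ Finset.univ.filter (fun p : Fin k × Fin k => p.1 < p.2),
        ((X p.1 : MvPolynomial (Fin k) ℚ) - X p.2) := by
  rw [← Matrix.det_submatrix_equiv_self Fin.revPerm
    (Matrix.of fun i q : Fin k => (X q : MvPolynomial (Fin k) ℚ) ^ (k - 1 - (i : ℕ)))]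
  have hsub : ((Matrix.of fun i q : Fin k =>
      (X q : MvPolynomial (Fin k) ℚ) ^ (k - 1 - (i : ℕ))).submatrix Fin.revPerm Fin.revPerm) =
      (Matrix.vandermonde fun q : Fin k => (X q.rev : MvPolynomial (Fin k) ℚ)).transpose := by
    refine Matrix.ext fun i q => ?_
    show (X (Fin.rev q) : MvPolynomial (Fin k) ℚ) ^ (k - 1 - ((Fin.rev i : Fin k) : ℕ)) =
      (X (Fin.rev q) : MvPolynomial (Fin k) ℚ) ^ (i : ℕ)
    congr 1
    have := i.is_lt
    rw [Fin.val_rev]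
    omega
  rw [hsub, Matrix.det_transpose, Matrix.det_vandermonde,
    prodIoi (fun i j : Fin k => (X j.rev : MvPolynomial (Fin k) ℚ) - X i.rev)]
  refine Finset.prod_nbij' (fun p => (p.2.rev, p.1.rev)) (fun p => (p.2.rev, p.1.rev))
    ?_ ?_ ?_ ?_ ?_
  · intro p hp
    simp only [Finset.mem_filter, Finset.mem_univ, true_and] at hp ⊢
    exact Fin.rev_lt_rev.mpr hp
  · intro p hp
    simp only [Finset.mem_filter, Finset.mem_univ, true_and] at hp ⊢
    exact Fin.rev_lt_rev.mpr hp
  · intro p _; simp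
  · intro p _; simp
  · intro p _; rfl

/-- **The Jacobi–Trudi identity for `λ = (a_k - k, ..., a_1 - 1)`.**  For
`a₁ < ... < a_k` positive, the Schur polynomial `s_λ(x₁,...,x_k)` equals the
`k × k` determinant with `(i, j)` entry `h_{a_{k+1-i} - k + j - 1}`
(`1`-indexed).  Since
`s_λ(x₁,...,x_k) · ∏_{i<j}(x_i - x_j) = det(x_i^{λ_j + k - j})` and
`λ_j + k - j = a_{k+1-j} - 1`, the identity is expressed as: the Jacobi–Trudi
determinant times the Vandermonde product equals the bialternant
determinant. -/
theorem jacobi_trudi (k : ℕ) (hk : 0 < k) (A : Finset ℕ) (hA : A.card = k)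
    (hpos : ∀ x ∈ A, 1 ≤ x) :
    Matrix.det (Matrix.of fun i j : Fin k =>
        hZ k ((A.orderEmbOfFin hA ⟨k - 1 - i, by omega⟩ : ℤ) - k + j)) *
      (∏ p ∈ Finset.univ.filter (fun p : Fin k × Fin k => p.1 < p.2),
        ((X p.1 : MvPolynomial (Fin k) ℚ) - X p.2))
    = Matrix.det (Matrix.of fun i j : Fin k =>
        (X i : MvPolynomial (Fin k) ℚ) ^
          (A.orderEmbOfFin hA ⟨k - 1 - j, by omega⟩ - 1)) := by
  have hb : ∀ i : Fin k, k - 1 - (i : ℕ) < k := fun i => by omega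
  have ha1 : ∀ i : Fin k, 1 ≤ (A.orderEmbOfFin hA ⟨k - 1 - (i : ℕ), hb i⟩ : ℕ) :=
    fun i => hpos _ (Finset.orderEmbOfFin_mem A hA _)
  set b : Fin k → ℕ := fun i => A.orderEmbOfFin hA ⟨k - 1 - (i : ℕ), hb i⟩ - 1 with hbdef
  have hH : (Matrix.of fun i j : Fin k =>
      hZ k ((A.orderEmbOfFin hA ⟨k - 1 - (i : ℕ), by omega⟩ : ℤ) - k + j)) =
      Matrix.of fun i j : Fin k => hZ k ((b i : ℤ) + 1 - k + j) := by
    refine Matrix.ext fun i j => ?_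
    show hZ k _ = hZ k _
    congr 1
    have := ha1 i
    simp only [hbdef]
    omega
  have hbase := key hk (fun i : Fin k => k - 1 - (i : ℕ))
  rw [baseH, one_mul] at hbase
  have hprod := baseX (k := k)
  rw [hH, ← hprod, ← hbase, key hk b]
  have hR : (Matrix.of fun i j : Fin k =>
      (X i : MvPolynomial (Fin k) ℚ) ^
        (A.orderEmbOfFin hA ⟨k - 1 - (j : ℕ), by omega⟩ - 1)) =
      (Matrix.of fun i q : Fin k => (X q : MvPolynomial (Fin k) ℚ) ^ b i).transpose := rfl
  rw [hR, Matrix.det_transpose]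
end
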